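/- If X ~ χ² with d degrees of freedom, then for any δ ∈ (0,1), Pr(X ≤ d + 2√(d·ln(1/δ)) + 2·ln(1/δ)) ≥ 1 − δ. -/

import Mathlib

open MeasureTheory ProbabilityTheory Real
open scoped ENNReal NNReal

lemma LM_gaussian_sq_exp {c : ℝ} (hc : c < 1/2) :
    Integrable (fun x => Real.exp (c * x^2)) (gaussianReal 0 1) ∧
    ∫ x, Real.exp (c * x^2) ∂(gaussianReal 0 1) = (Real.sqrt (1 - 2*c))⁻¹ := by
  have hb : (0:ℝ) < 1/2 - c := by linarith
  have hpdf : ∀ x : ℝ, gaussianPDFReal 0 1 x * Real.exp (c * x^2)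
      = (Real.sqrt (2*π))⁻¹ * Real.exp (-(1/2 - c) * x^2) := by
    intro x
    simp only [gaussianPDFReal, NNReal.coe_one, mul_one, sub_zero]
    rw [mul_assoc, ← Real.exp_add]
    ring_nf
  rw [gaussianReal_of_var_ne_zero _ one_ne_zero]
  have hwd : volume.withDensity (gaussianPDF 0 1)
      = volume.withDensity (fun x => ((gaussianPDFReal 0 1 x).toNNReal : ℝ≥0∞)) := rfl
  constructor
  · rw [gaussianPDF_def]
    rw [integrable_withDensity_iff (measurable_gaussianPDFReal 0 1).ennreal_ofReal (ae_of_all _ fun x => ENNReal.ofReal_lt_top)]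
    have : (fun x => Real.exp (c * x^2) * (ENNReal.ofReal (gaussianPDFReal 0 1 x)).toReal)
        = fun x => (Real.sqrt (2*π))⁻¹ * Real.exp (-(1/2 - c) * x^2) := by
      funext x
      rw [ENNReal.toReal_ofReal (gaussianPDFReal_nonneg _ _ _), mul_comm, hpdf x]
    rw [this]
    exact (integrable_exp_neg_mul_sq hb).const_mul _
  · rw [hwd, integral_withDensity_eq_integral_smul (measurable_gaussianPDFReal 0 1).real_toNNReal]
    have : (fun x => ((gaussianPDFReal 0 1 x).toNNReal) • Real.exp (c * x^2))
        = fun x => (Real.sqrt (2*π))⁻¹ * Real.exp (-(1/2 - c) * x^2) := by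
      funext x
      rw [NNReal.smul_def, smul_eq_mul, Real.coe_toNNReal _ (gaussianPDFReal_nonneg _ _ _), hpdf x]
    rw [this, integral_const_mul, integral_gaussian, ← Real.sqrt_inv,
      ← Real.sqrt_mul (by positivity), ← Real.sqrt_inv]
    congr 1
    have hπ := Real.pi_ne_zero
    have h2 : (1:ℝ) - 2*c ≠ 0 := by linarith
    rw [eq_comm, inv_eq_iff_eq_inv, mul_inv, inv_inv, inv_div]
    field_simp

lemma LM_iIndepFun_ae_eq {Ω ι : Type*} [Countable ι] {mΩ : MeasurableSpace Ω} {μ : Measure Ω}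
    {β : ι → Type*} [m : ∀ i, MeasurableSpace (β i)] {f g : ∀ i, Ω → β i}
    (h : iIndepFun f μ) (hfg : ∀ i, f i =ᵐ[μ] g i) : iIndepFun g μ := by
  rw [iIndepFun_iff_measure_inter_preimage_eq_mul] at h ⊢
  intro S sets hsets
  have hae : ∀ᵐ ω ∂μ, ∀ i, f i ω = g i ω := ae_all_iff.mpr hfg
  have h1 : ∀ i, μ (g i ⁻¹' sets i) = μ (f i ⁻¹' sets i) := by
    intro i
    refine measure_congr ?_
    filter_upwards [hfg i] with ω hω
    show (g i ω ∈ sets i) = (f i ω ∈ sets i)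
    rw [hω]
  have hInter : ((⋂ i ∈ S, g i ⁻¹' sets i : Set Ω)) =ᵐ[μ] (⋂ i ∈ S, f i ⁻¹' sets i : Set Ω) := by
    filter_upwards [hae] with ω hω
    show (ω ∈ ⋂ i ∈ S, g i ⁻¹' sets i) = (ω ∈ ⋂ i ∈ S, f i ⁻¹' sets i)
    simp only [Set.mem_iInter, Set.mem_preimage, hω]
  rw [measure_congr hInter, h S hsets]
  exact Finset.prod_congr rfl fun i _ => (h1 i).symm

lemma LM_key (d : ℕ) (hd : 0 < d) {t a l : ℝ} (ht : 0 < t)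
    (ha : a = d + 2*Real.sqrt (d*t) + 2*t) (hl : l = (1 - d/a)/2) :
    Real.exp (-l*a) * ((Real.sqrt (1 - 2*l))⁻¹)^d ≤ Real.exp (-t) := by
  have hd' : (0:ℝ) < d := Nat.cast_pos.mpr hd
  have hst : 0 ≤ Real.sqrt (d*t) := Real.sqrt_nonneg _
  have ha0 : 0 < a := by rw [ha]; linarith
  have had : (d:ℝ) < a := by rw [ha]; linarith
  have h2l : 1 - 2*l = d/a := by rw [hl]; ring
  set v := Real.sqrt (t/d) with hv
  have hv0 : 0 ≤ v := Real.sqrt_nonneg _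
  have hv2 : v^2 = t/d := Real.sq_sqrt (by positivity)
  have hdv : Real.sqrt (d*t) = d * v := by
    rw [hv, show (d:ℝ)*t = (d:ℝ)^2 * (t/d) by field_simp,
      Real.sqrt_mul (sq_nonneg _), Real.sqrt_sq hd'.le]
  have hlog : Real.log (a/d) ≤ 2*v := by
    rw [Real.log_le_iff_le_exp (by positivity)]
    have h1 : a/d = 1 + 2*v + 2*v^2 := by
      rw [ha, hdv, hv2]; field_simp
    have h2 := Real.quadratic_le_exp_of_nonneg (by linarith : (0:ℝ) ≤ 2*v)
    rw [h1]; nlinarith [h2]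
  have hpow : ((Real.sqrt (1 - 2*l))⁻¹)^d = Real.exp ((d/2) * Real.log (a/d)) := by
    rw [h2l, ← Real.sqrt_inv, inv_div, Real.sqrt_eq_rpow, ← Real.rpow_natCast (_ ^ _),
      ← Real.rpow_mul (by positivity)]
    rw [Real.rpow_def_of_pos (by positivity)]
    ring_nf
  rw [hpow, ← Real.exp_add]
  apply Real.exp_le_exp.mpr
  have hla : l * a = Real.sqrt (d*t) + t := by
    have h' : l * a = (a - d)/2 := by rw [hl]; field_simp
    rw [h', ha]; ring
  have : (d/2) * Real.log (a/d) ≤ d * v := by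
    calc (d/2) * Real.log (a/d) ≤ (d/2) * (2*v) := by
          apply mul_le_mul_of_nonneg_left hlog (by positivity)
      _ = d * v := by ring
  rw [hdv] at hla
  nlinarith [this, hla]


/-- Laurent–Massart chi-squared upper tail: if `X = ‖Z‖²` with `Z ~ N(0, I_d)`
(i.e. `X ~ χ²_d`), then for any `δ ∈ (0,1)`,
`Pr(X ≤ d + 2√(d ln(1/δ)) + 2 ln(1/δ)) ≥ 1 − δ`. -/
theorem chi_squared_upper_tail {Ω : Type*} [MeasureSpace Ω]
    [IsProbabilityMeasure (ℙ : Measure Ω)]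
    (d : ℕ) (Z : Ω → Fin d → ℝ)
    (hindep : iIndepFun (fun i ω => Z ω i) ℙ)
    (hgauss : ∀ i, Measure.map (fun ω => Z ω i) ℙ = gaussianReal 0 1)
    (δ : ℝ) (hδ : δ ∈ Set.Ioo (0 : ℝ) 1) :
    1 - ENNReal.ofReal δ ≤
      ℙ {ω | ∑ i, (Z ω i) ^ 2 ≤
        (d : ℝ) + 2 * Real.sqrt (d * Real.log (1 / δ)) + 2 * Real.log (1 / δ)} := by
  obtain ⟨hδ0, hδ1⟩ := hδ
  set t := Real.log (1/δ) with htdef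
  have ht : 0 < t := Real.log_pos (by rw [lt_div_iff₀ hδ0]; linarith)
  set a : ℝ := d + 2 * Real.sqrt (d * t) + 2 * t with hadef
  rcases Nat.eq_zero_or_pos d with hd0 | hd
  · subst hd0
    have hset : {ω : Ω | ∑ i : Fin 0, (Z ω i)^2 ≤ a} = Set.univ := by
      ext ω
      simp only [Finset.univ_eq_empty, Finset.sum_empty, Set.mem_setOf_eq, Set.mem_univ, iff_true,
        hadef]
      have h0 := Real.sqrt_nonneg ((0:ℝ) * t)
      push_cast
      linarith [h0]
    rw [hset, measure_univ]
    exact tsub_le_self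
  -- measurable modifications
  have hZae : ∀ i, AEMeasurable (fun ω => Z ω i) ℙ := by
    intro i
    by_contra hc
    have h0 := Measure.map_of_not_aemeasurable hc
    rw [hgauss i] at h0
    exact (IsProbabilityMeasure.ne_zero (gaussianReal 0 1)) h0
  set W : Fin d → Ω → ℝ := fun i => (hZae i).mk _ with hWdef
  have hWm : ∀ i, Measurable (W i) := fun i => (hZae i).measurable_mk
  have hWeq : ∀ i, (fun ω => Z ω i) =ᵐ[ℙ] W i := fun i => (hZae i).ae_eq_mk
  have hindepW : iIndepFun W ℙ := LM_iIndepFun_ae_eq hindep hWeq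
  have hmapW : ∀ i, Measure.map (W i) ℙ = gaussianReal 0 1 := fun i => by
    rw [← Measure.map_congr (hWeq i), hgauss i]
  set X : Fin d → Ω → ℝ := fun i ω => (W i ω)^2 with hXdef
  have hXm : ∀ i, Measurable (X i) := fun i => (hWm i).pow_const 2
  have hindepX : iIndepFun X ℙ :=
    hindepW.comp (fun _ x => x^2) (fun _ => measurable_id.pow_const 2)
  set l : ℝ := (1 - d/a)/2 with hldef
  have hd' : (0:ℝ) < d := Nat.cast_pos.mpr hd
  have hst : 0 ≤ Real.sqrt (d*t) := Real.sqrt_nonneg _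
  have ha0 : 0 < a := by rw [hadef]; linarith
  have had : (d:ℝ) < a := by rw [hadef]; linarith
  have hda1 : (d:ℝ)/a < 1 := (div_lt_one ha0).mpr had
  have hda0 : 0 < (d:ℝ)/a := div_pos hd' ha0
  have hl0 : 0 ≤ l := by rw [hldef]; linarith
  have hl12 : l < 1/2 := by rw [hldef]; linarith
  have hcont : Continuous fun x : ℝ => Real.exp (l * x^2) := by fun_prop
  have hint1 : Integrable (fun x => Real.exp (l * x^2)) (gaussianReal 0 1) :=
    (LM_gaussian_sq_exp hl12).1
  have hintX : ∀ i, Integrable (fun ω => Real.exp (l * X i ω)) ℙ := by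
    intro i
    have h := hint1
    rw [← hmapW i] at h
    exact (integrable_map_measure hcont.aestronglyMeasurable (hWm i).aemeasurable).mp h
  have hmgf : ∀ i, mgf (X i) ℙ l = (Real.sqrt (1 - 2*l))⁻¹ := by
    intro i
    rw [mgf, ← (LM_gaussian_sq_exp hl12).2, ← hmapW i,
      integral_map (hWm i).aemeasurable hcont.aestronglyMeasurable]
  have hintSum : Integrable (fun ω => Real.exp (l * (∑ i, X i) ω)) ℙ :=
    hindepX.integrable_exp_mul_sum hXm (fun i _ => hintX i)
  have hchern := measure_ge_le_exp_mul_mgf (μ := ℙ) (X := ∑ i, X i) a hl0 hintSum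
  rw [hindepX.mgf_sum hXm] at hchern
  have hprod : ∏ i : Fin d, mgf (X i) ℙ l = ((Real.sqrt (1 - 2*l))⁻¹)^d := by
    simp only [hmgf, Finset.prod_const, Finset.card_univ, Fintype.card_fin]
  rw [hprod] at hchern
  have hbound : (ℙ {ω | a ≤ (∑ i, X i) ω}).toReal ≤ δ := by
    refine hchern.trans ?_
    have hkey := LM_key d hd ht hadef hldef
    refine hkey.trans_eq ?_
    rw [htdef, one_div, Real.log_inv, neg_neg, Real.exp_log hδ0]
  have hENN : ℙ {ω | a ≤ (∑ i, X i) ω} ≤ ENNReal.ofReal δ := by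
    rw [← ENNReal.ofReal_toReal (measure_ne_top ℙ _)]
    exact ENNReal.ofReal_le_ofReal hbound
  have hsetae : ℙ {ω | ∑ i, (Z ω i)^2 ≤ a} = ℙ {ω | (∑ i, X i) ω ≤ a} := by
    refine measure_congr ?_
    have hae : ∀ᵐ ω ∂ℙ, ∀ i, Z ω i = W i ω := ae_all_iff.mpr hWeq
    filter_upwards [hae] with ω hω
    show (∑ i, (Z ω i)^2 ≤ a) = ((∑ i, X i) ω ≤ a)
    have : ∑ i, (Z ω i)^2 = (∑ i, X i) ω := by
      rw [Finset.sum_apply]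
      exact Finset.sum_congr rfl fun i _ => by rw [hω i]
    rw [this]
  rw [hsetae]
  have hsm : MeasurableSet {ω | (∑ i, X i) ω ≤ a} := by
    have hSm : Measurable fun ω => ∑ i, X i ω := Finset.measurable_sum _ fun i _ => hXm i
    simp only [Finset.sum_apply]
    exact measurableSet_le hSm measurable_const
  have hsub : {ω | (∑ i, X i) ω ≤ a}ᶜ ⊆ {ω | a ≤ (∑ i, X i) ω} := by
    intro ω hω
    simp only [Set.mem_compl_iff, Set.mem_setOf_eq, not_le] at hω
    exact le_of_lt hω
  calc 1 - ENNReal.ofReal δ ≤ 1 - ℙ ({ω | (∑ i, X i) ω ≤ a}ᶜ) :=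
        by gcongr; exact (measure_mono hsub).trans hENN
    _ = ℙ {ω | (∑ i, X i) ω ≤ a} := by
        rw [prob_compl_eq_one_sub hsm]
        exact ENNReal.sub_sub_cancel ENNReal.one_ne_top prob_le_one
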